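/- Let K₁ ∈ GL(N, ℂ) such that K₁ and −(K₁*)⁻¹ share no eigenvalues. Suppose M₁, r₁, s₁ satisfy K₁M₁ + M₁(K₁*)⁻¹ = −r₁ s₁† (K₁*)⁻¹, and set M₂ := M₁*, r₂ := (K₁*)⁻¹ r₁*, s₂ := −(K₁†)⁻¹ s₁*, K₂ := −(K₁*)⁻¹. Then K₂M₂ − M₂K₁ = r₂ s₁ᵀ, i.e., M₂ solves the second Sylvester equation K₂M₂ − M₂K₁ = r₂ s₁ᵀ. -/

import Mathlib

open Matrix

theorem conjugate_sylvester_equation (N : ℕ)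
    (K₁ M₁ : Matrix (Fin N) (Fin N) ℂ)
    (r₁ s₁ : Matrix (Fin N) (Fin 1) ℂ)
    (hK : IsUnit K₁.det)
    (hspec : ∀ μ : ℂ, μ ∈ spectrum ℂ K₁ → μ ∉ spectrum ℂ (-(K₁.map (starRingEnd ℂ))⁻¹))
    (hSyl : K₁ * M₁ + M₁ * (K₁.map (starRingEnd ℂ))⁻¹ =
      -(r₁ * s₁.conjTranspose * (K₁.map (starRingEnd ℂ))⁻¹))
    (K₂ M₂ : Matrix (Fin N) (Fin N) ℂ) (r₂ : Matrix (Fin N) (Fin 1) ℂ)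
    (hK₂ : K₂ = -(K₁.map (starRingEnd ℂ))⁻¹)
    (hM₂ : M₂ = M₁.map (starRingEnd ℂ))
    (hr₂ : r₂ = (K₁.map (starRingEnd ℂ))⁻¹ * r₁.map (starRingEnd ℂ)) :
    K₂ * M₂ - M₂ * K₁ = r₂ * s₁.transpose := by
  set c := starRingEnd ℂ
  -- basic facts
  have hdetc : (K₁.map c).det = c K₁.det := ((c : ℂ →+* ℂ).map_det K₁).symm
  have hKc : IsUnit (K₁.map c).det := by rw [hdetc]; exact hK.map c
  -- map of inverse
  have hmapinv : ∀ A : Matrix (Fin N) (Fin N) ℂ, (A⁻¹).map c = (A.map c)⁻¹ := by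
    intro A
    have h1 : A.map c = Aᵀᴴ := by
      simp [conjTranspose, Matrix.map_map, c]
    have h2 : (A⁻¹).map c = (A⁻¹)ᵀᴴ := by
      simp [conjTranspose, Matrix.map_map, c]
    rw [h1, h2, transpose_nonsing_inv, conjTranspose_nonsing_inv]
  have hmapmap : ∀ {m n : Type} (A : Matrix m n ℂ), (A.map c).map c = A := by
    intro m n A
    ext i j; simp [Matrix.map_apply, c, Complex.conj_conj]
  have madd : ∀ {m n : Type} (A B : Matrix m n ℂ), (A + B).map c = A.map c + B.map c := by
    intro m n A B; ext i j; simp [Matrix.map_apply, c]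
  have mneg : ∀ {m n : Type} (A : Matrix m n ℂ), (-A).map c = -(A.map c) := by
    intro m n A; ext i j; simp [Matrix.map_apply, c]
  have hsc : (s₁.conjTranspose).map c = s₁.transpose := by
    ext i j; simp [conjTranspose, Matrix.map_apply, c, Complex.conj_conj]
  -- conjugate hSyl
  have hC := congrArg (fun X : Matrix (Fin N) (Fin N) ℂ => X.map c) hSyl
  simp only [madd, Matrix.map_mul, mneg, hmapinv, hmapmap, hsc] at hC
  -- hC : K₁.map c * M₁.map c + M₁.map c * K₁⁻¹ = -(r₁.map c * s₁ᵀ * K₁⁻¹)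
  subst hK₂ hM₂ hr₂
  have hmul := congrArg (fun X : Matrix (Fin N) (Fin N) ℂ =>
    (K₁.map c)⁻¹ * X * K₁) hC
  simp only [Matrix.mul_add, Matrix.add_mul, Matrix.mul_neg, Matrix.neg_mul] at hmul
  rw [← Matrix.mul_assoc ((K₁.map c)⁻¹) (K₁.map c), nonsing_inv_mul _ hKc,
    Matrix.one_mul] at hmul
  have h3 : (K₁.map c)⁻¹ * (M₁.map c * K₁⁻¹) * K₁ = (K₁.map c)⁻¹ * M₁.map c := by
    rw [Matrix.mul_assoc, Matrix.mul_assoc, nonsing_inv_mul _ hK, Matrix.mul_one]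
  have h4 : (K₁.map c)⁻¹ * (r₁.map c * s₁ᵀ * K₁⁻¹) * K₁ =
      (K₁.map c)⁻¹ * (r₁.map c * s₁ᵀ) := by
    rw [Matrix.mul_assoc ((K₁.map c)⁻¹) _ K₁, Matrix.mul_assoc (r₁.map c * s₁ᵀ),
      nonsing_inv_mul _ hK, Matrix.mul_one]
  rw [h3, h4] at hmul
  -- hmul : M₁.map c * K₁ + (K₁.map c)⁻¹ * M₁.map c = -((K₁.map c)⁻¹ * (r₁.map c * s₁ᵀ))
  have : -(K₁.map c)⁻¹ * M₁.map c - M₁.map c * K₁ =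
      (K₁.map c)⁻¹ * (r₁.map c * s₁ᵀ) := by
    rw [Matrix.neg_mul]
    linear_combination (norm := abel) -hmul
  rw [this, Matrix.mul_assoc]
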